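/- For each positive integer K, the set S = {x ∈ ℝ^(2^K − 1) : x_{2^{k−1}}² + ⋯ + x_{2^k − 1}² ≤ 1 for all k ∈ {1,…,K}}, a direct sum of Euclidean balls of dimensions 1, 2, 4, …, 2^{K−1}, has facial dimension signature {0, 1, 2, …, 2^K − 1}. -/

import Mathlib

open Set Metric RealInnerProductSpace

variable {E : Type*} [NormedAddCommGroup E] [NormedSpace ℝ E]

/-- A face of a convex set: a convex subset `F` of `C` such that any open segment of `C`
meeting `F` has both endpoints in `F`. -/
def IsFace (C F : Set E) : Prop := Convex ℝ F ∧ IsExtreme ℝ C F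

/-- Dimension of a convex set: the dimension of its affine hull. -/
noncomputable def sdim (S : Set E) : ℕ := Module.finrank ℝ (affineSpan ℝ S).direction

/-- The facial dimension signature: the set of dimensions of nonempty faces. -/
def faceDimSig (C : Set E) : Set ℕ :=
  {d | ∃ F : Set E, IsFace C F ∧ F.Nonempty ∧ sdim F = d}

/-- The minimal face of `C` containing `x`. -/
def minFace (C : Set E) (x : E) : Set E := ⋂₀ {F | IsFace C F ∧ x ∈ F}

open Set Metric RealInnerProductSpace
open scoped Classical

section Aux

/-- the ambient convex body -/
def CK (K : ℕ) : Set (EuclideanSpace ℝ (Fin (2 ^ K - 1))) :=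
  {x | ∀ k ∈ Finset.Icc 1 K,
      ∑ j ∈ Finset.univ.filter
          (fun j : Fin (2 ^ K - 1) => 2 ^ (k - 1) - 1 ≤ (j : ℕ) ∧ (j : ℕ) < 2 ^ k - 1),
        (x j) ^ 2 ≤ 1}

def blockF (K k : ℕ) : Finset (Fin (2 ^ K - 1)) :=
  Finset.univ.filter (fun j => 2 ^ (k - 1) - 1 ≤ (j : ℕ) ∧ (j : ℕ) < 2 ^ k - 1)

lemma mem_blockF {K k : ℕ} {j : Fin (2 ^ K - 1)} :
    j ∈ blockF K k ↔ 2 ^ (k - 1) - 1 ≤ (j : ℕ) ∧ (j : ℕ) < 2 ^ k - 1 := by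
  simp [blockF]

lemma mem_CK {K : ℕ} {x : EuclideanSpace ℝ (Fin (2 ^ K - 1))} :
    x ∈ CK K ↔ ∀ k ∈ Finset.Icc 1 K, ∑ j ∈ blockF K k, (x j) ^ 2 ≤ 1 := Iff.rfl

lemma block_unique {k k' j : ℕ} (hk : 1 ≤ k) (hk' : 1 ≤ k')
    (h1 : 2 ^ (k - 1) - 1 ≤ j) (h2 : j < 2 ^ k - 1)
    (h3 : 2 ^ (k' - 1) - 1 ≤ j) (h4 : j < 2 ^ k' - 1) : k = k' := by
  by_contra hne
  rcases Nat.lt_or_ge k k' with h | h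
  · have : 2 ^ k ≤ 2 ^ (k' - 1) := Nat.pow_le_pow_right (by norm_num) (by omega)
    have := Nat.one_le_two_pow (n := k' - 1)
    omega
  · have hlt : k' < k := by omega
    have : 2 ^ k' ≤ 2 ^ (k - 1) := Nat.pow_le_pow_right (by norm_num) (by omega)
    have := Nat.one_le_two_pow (n := k - 1)
    omega

lemma exists_block (K j : ℕ) (hj : j < 2 ^ K - 1) :
    ∃ k, 1 ≤ k ∧ k ≤ K ∧ 2 ^ (k - 1) - 1 ≤ j ∧ j < 2 ^ k - 1 := by
  refine ⟨Nat.log 2 (j + 1) + 1, by omega, ?_, ?_, ?_⟩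
  · have : Nat.log 2 (j + 1) < K := Nat.log_lt_of_lt_pow (by omega) (by omega)
    omega
  · have := Nat.pow_log_le_self 2 (show j + 1 ≠ 0 by omega)
    simp only [Nat.add_sub_cancel]
    omega
  · have := Nat.lt_pow_succ_log_self (by norm_num : 1 < 2) (j + 1)
    have h2 : 2 ^ (Nat.log 2 (j + 1) + 1) = 2 ^ Nat.log 2 (j + 1) * 2 := by rw [pow_succ]
    omega

lemma exists_subset_sum (K d : ℕ) (hd : d < 2 ^ K) :
    ∃ T : Finset ℕ, T ⊆ Finset.Icc 1 K ∧ ∑ k ∈ T, 2 ^ (k - 1) = d := by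
  induction K generalizing d with
  | zero => exact ⟨∅, by simp, by simpa using by omega⟩
  | succ K ih =>
    by_cases h : d < 2 ^ K
    · obtain ⟨T, hT, hsum⟩ := ih d h
      exact ⟨T, hT.trans (Finset.Icc_subset_Icc_right (by omega)), hsum⟩
    · obtain ⟨T, hT, hsum⟩ := ih (d - 2 ^ K) (by rw [pow_succ] at hd; omega)
      have hKT : K + 1 ∉ T := fun hmem => by
        have := hT hmem; simp at this
      refine ⟨insert (K + 1) T, ?_, ?_⟩
      · intro x hx
        rcases Finset.mem_insert.mp hx with rfl | hx
        · simp
        · have h2 := hT hx; simp at h2 ⊢; omega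
      · rw [Finset.sum_insert hKT, hsum]
        simp only [Nat.add_sub_cancel]
        omega

lemma idx_lt {K k : ℕ} (hk1 : 1 ≤ k) (hkK : k ≤ K) : 2 ^ (k - 1) - 1 < 2 ^ K - 1 := by
  have h1 : 2 ^ (k - 1) < 2 ^ k := Nat.pow_lt_pow_right one_lt_two (by omega)
  have h2 : 2 ^ k ≤ 2 ^ K := Nat.pow_le_pow_right (by norm_num) hkK
  have h3 : 1 ≤ 2 ^ (k - 1) := Nat.one_le_two_pow
  omega

def idx (K k : ℕ) (hk1 : 1 ≤ k) (hkK : k ≤ K) : Fin (2 ^ K - 1) :=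
  ⟨2 ^ (k - 1) - 1, idx_lt hk1 hkK⟩

lemma idx_mem_blockF {K k : ℕ} (hk1 : 1 ≤ k) (hkK : k ≤ K) :
    idx K k hk1 hkK ∈ blockF K k := by
  have h1 : 2 ^ (k - 1) < 2 ^ k := Nat.pow_lt_pow_right one_lt_two (by omega)
  have h3 : 1 ≤ 2 ^ (k - 1) := Nat.one_le_two_pow
  rw [mem_blockF]
  exact ⟨le_refl _, by simp [idx]; omega⟩

lemma sq_le_one_of_mem {K k : ℕ} {x : EuclideanSpace ℝ (Fin (2 ^ K - 1))}
    (hx : x ∈ CK K) (hk : k ∈ Finset.Icc 1 K) {j : Fin (2 ^ K - 1)} (hj : j ∈ blockF K k) :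
    x j ^ 2 ≤ 1 :=
  le_trans (Finset.single_le_sum (f := fun i => x i ^ 2) (fun i _ => sq_nonneg (x i)) hj)
    (mem_CK.mp hx k hk)

lemma forced_zero {K k : ℕ} {x : EuclideanSpace ℝ (Fin (2 ^ K - 1))}
    (hx : x ∈ CK K) (hk : k ∈ Finset.Icc 1 K) {j1 j2 : Fin (2 ^ K - 1)}
    (h1 : j1 ∈ blockF K k) (h2 : j2 ∈ blockF K k) (hne : j1 ≠ j2) (hx1 : x j1 = 1) :
    x j2 = 0 := by
  have hsub : ({j1, j2} : Finset (Fin (2 ^ K - 1))) ⊆ blockF K k := by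
    intro i hi; rcases Finset.mem_insert.mp hi with rfl | hi
    · exact h1
    · rw [Finset.mem_singleton] at hi; exact hi ▸ h2
  have hsum : x j1 ^ 2 + x j2 ^ 2 ≤ 1 := by
    have h := Finset.sum_le_sum_of_subset_of_nonneg hsub (fun i _ _ => sq_nonneg (x i))
    rw [Finset.sum_pair hne] at h
    exact h.trans (mem_CK.mp hx k hk)
  have : x j2 ^ 2 ≤ 0 := by rw [hx1] at hsum; nlinarith
  nlinarith [sq_nonneg (x j2)]

lemma sum_sq_le_one {K k : ℕ} (f : EuclideanSpace ℝ (Fin (2 ^ K - 1))) (j0 : Fin (2 ^ K - 1))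
    (h0 : ∀ j ∈ blockF K k, j ≠ j0 → f j = 0) (h1 : f j0 ^ 2 ≤ 1) :
    ∑ j ∈ blockF K k, f j ^ 2 ≤ 1 := by
  calc ∑ j ∈ blockF K k, f j ^ 2
      ≤ ∑ j ∈ blockF K k, (if j = j0 then f j0 ^ 2 else 0) := by
        apply Finset.sum_le_sum
        intro j hj
        by_cases h : j = j0
        · subst h; simp
        · simp [h, h0 j hj h]
    _ = if j0 ∈ blockF K k then f j0 ^ 2 else 0 := Finset.sum_ite_eq' _ _ _
    _ ≤ 1 := by split
                · exact h1
                · norm_num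

end Aux

section Face

variable (K : ℕ) (T : Finset ℕ)

def faceSet : Set (EuclideanSpace ℝ (Fin (2 ^ K - 1))) :=
  CK K ∩ {x | ∀ j : Fin (2 ^ K - 1),
    (∃ k, k ∈ Finset.Icc 1 K ∧ k ∉ T ∧ (j : ℕ) = 2 ^ (k - 1) - 1) → x j = 1}

noncomputable def pt : EuclideanSpace ℝ (Fin (2 ^ K - 1)) :=
  WithLp.toLp 2 (fun j : Fin (2 ^ K - 1) =>
    if (∃ k, k ∈ Finset.Icc 1 K ∧ k ∉ T ∧ (j : ℕ) = 2 ^ (k - 1) - 1) then (1 : ℝ) else 0)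

lemma pt_apply (j : Fin (2 ^ K - 1)) : pt K T j =
    if (∃ k, k ∈ Finset.Icc 1 K ∧ k ∉ T ∧ (j : ℕ) = 2 ^ (k - 1) - 1) then (1 : ℝ) else 0 := rfl

variable {K T}

lemma pt_eq_zero {k : ℕ} (hk : k ∈ Finset.Icc 1 K) {j : Fin (2 ^ K - 1)}
    (hj : j ∈ blockF K k) (h : k ∈ T ∨ (j : ℕ) ≠ 2 ^ (k - 1) - 1) : pt K T j = 0 := by
  rw [pt_apply]
  rw [if_neg]
  rintro ⟨k', hk', hk'T, hjval⟩
  simp only [Finset.mem_Icc] at hk hk'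
  rw [mem_blockF] at hj
  have h1 : 2 ^ (k' - 1) < 2 ^ k' := Nat.pow_lt_pow_right one_lt_two (by omega)
  have h3 : 1 ≤ 2 ^ (k' - 1) := Nat.one_le_two_pow
  have hkk : k' = k := block_unique hk'.1 hk.1 (by omega) (by omega) hj.1 hj.2
  subst hkk
  rcases h with h | h
  · exact hk'T h
  · exact h hjval

lemma pt_mem_zero_one (j : Fin (2 ^ K - 1)) : pt K T j = 0 ∨ pt K T j = 1 := by
  rw [pt_apply]; split
  · right; rfl
  · left; rfl

lemma pt_sq_le_one (j : Fin (2 ^ K - 1)) : pt K T j ^ 2 ≤ 1 := by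
  rcases pt_mem_zero_one (T := T) j with h | h <;> rw [h] <;> norm_num

lemma pt_mem_CK : pt K T ∈ CK K := by
  rw [mem_CK]
  intro k hk
  have hk' := Finset.mem_Icc.mp hk
  apply sum_sq_le_one (pt K T) (idx K k hk'.1 hk'.2)
  · intro j hj hne
    apply pt_eq_zero hk hj
    right
    intro hval
    exact hne (Fin.ext hval)
  · exact pt_sq_le_one _

lemma pt_mem_face : pt K T ∈ faceSet K T := by
  refine ⟨pt_mem_CK, fun j hj => ?_⟩
  rw [pt_apply]
  rw [if_pos hj]

lemma cond_of_not_T {k : ℕ} (hk1 : 1 ≤ k) (hkK : k ≤ K) (hkT : k ∉ T) :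
    ∃ k', k' ∈ Finset.Icc 1 K ∧ k' ∉ T ∧ ((idx K k hk1 hkK : Fin (2 ^ K - 1)) : ℕ) = 2 ^ (k' - 1) - 1 :=
  ⟨k, Finset.mem_Icc.mpr ⟨hk1, hkK⟩, hkT, rfl⟩

/-- the perturbed point `pt + e_j` for `j` in a free block -/
lemma q_mem_face (hT : T ⊆ Finset.Icc 1 K) {k₀ : ℕ} (hk₀ : k₀ ∈ T)
    {j : Fin (2 ^ K - 1)} (hj : j ∈ blockF K k₀) :
    pt K T + EuclideanSpace.single j (1 : ℝ) ∈ faceSet K T := by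
  have hk₀Icc := hT hk₀
  have hk₀' := Finset.mem_Icc.mp hk₀Icc
  have happ : ∀ l : Fin (2 ^ K - 1),
      (pt K T + EuclideanSpace.single j (1 : ℝ)) l
        = pt K T l + (if l = j then 1 else 0) := by
    intro l
    simp [EuclideanSpace.single_apply]
  constructor
  · rw [mem_CK]
    intro k hk
    have hk' := Finset.mem_Icc.mp hk
    by_cases hkk : k = k₀
    · subst hkk
      apply sum_sq_le_one _ j
      · intro l hl hne
        rw [happ, if_neg hne, add_zero]
        exact pt_eq_zero hk hl (Or.inl hk₀)
      · rw [happ, if_pos rfl, pt_eq_zero hk hj (Or.inl hk₀), zero_add]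
        norm_num
    · apply sum_sq_le_one _ (idx K k hk'.1 hk'.2)
      · intro l hl hne
        have hlj : l ≠ j := by
          intro h
          subst h
          rw [mem_blockF] at hl hj
          exact hkk (block_unique hk'.1 hk₀'.1 hl.1 hl.2 hj.1 hj.2)
        rw [happ, if_neg hlj, add_zero]
        apply pt_eq_zero hk hl
        right
        intro hval
        exact hne (Fin.ext hval)
      · have hij : idx K k hk'.1 hk'.2 ≠ j := by
          intro h
          have := idx_mem_blockF hk'.1 hk'.2
          rw [h, mem_blockF] at this
          rw [mem_blockF] at hj
          exact hkk (block_unique hk'.1 hk₀'.1 this.1 this.2 hj.1 hj.2)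
        rw [happ, if_neg hij, add_zero]
        exact pt_sq_le_one _
  · intro j' hj'
    obtain ⟨k', hk'Icc, hk'T, hval⟩ := hj'
    have hk'' := Finset.mem_Icc.mp hk'Icc
    have hj'j : j' ≠ j := by
      intro h
      subst h
      rw [mem_blockF] at hj
      have h1 : 2 ^ (k' - 1) < 2 ^ k' := Nat.pow_lt_pow_right one_lt_two (by omega)
      have h3 : 1 ≤ 2 ^ (k' - 1) := Nat.one_le_two_pow
      have : k' = k₀ := block_unique hk''.1 hk₀'.1 (by omega) (by omega) hj.1 hj.2
      exact hk'T (this ▸ hk₀)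
    rw [happ, if_neg hj'j, add_zero]
    rw [pt_apply]
    exact if_pos ⟨k', hk'Icc, hk'T, hval⟩

lemma faceSet_convex : Convex ℝ (faceSet K T) := by
  rintro x ⟨hxC, hxE⟩ y ⟨hyC, hyE⟩ a b ha hb hab
  have happ : ∀ l : Fin (2 ^ K - 1), (a • x + b • y) l = a * x l + b * y l := by
    intro l; simp
  constructor
  · rw [mem_CK]
    intro k hk
    calc ∑ j ∈ blockF K k, ((a • x + b • y) j) ^ 2
        ≤ ∑ j ∈ blockF K k, (a * x j ^ 2 + b * y j ^ 2) := by
          apply Finset.sum_le_sum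
          intro j hj
          rw [happ]
          nlinarith [sq_nonneg (x j - y j), mul_nonneg ha hb]
      _ = a * ∑ j ∈ blockF K k, x j ^ 2 + b * ∑ j ∈ blockF K k, y j ^ 2 := by
          rw [Finset.sum_add_distrib, Finset.mul_sum, Finset.mul_sum]
      _ ≤ a * 1 + b * 1 := by
          exact add_le_add (mul_le_mul_of_nonneg_left (mem_CK.mp hxC k hk) ha)
            (mul_le_mul_of_nonneg_left (mem_CK.mp hyC k hk) hb)
      _ = 1 := by linarith
  · intro j hj
    rw [happ, hxE j hj, hyE j hj]
    linarith

lemma faceSet_extreme : IsExtreme ℝ (CK K) (faceSet K T) := by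
  constructor
  · exact Set.inter_subset_left
  · rintro x1 hx1 x2 hx2 z ⟨hzC, hzE⟩ hseg
    obtain ⟨a, b, ha, hb, hab, hz⟩ := hseg
    have key : ∀ j : Fin (2 ^ K - 1),
        (∃ k, k ∈ Finset.Icc 1 K ∧ k ∉ T ∧ (j : ℕ) = 2 ^ (k - 1) - 1) →
        x1 j = 1 ∧ x2 j = 1 := by
      intro j hj
      obtain ⟨k, hkIcc, hkT, hval⟩ := hj
      have hk' := Finset.mem_Icc.mp hkIcc
      have hjb : j ∈ blockF K k := by
        rw [mem_blockF, hval]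
        have h1 : 2 ^ (k - 1) < 2 ^ k := Nat.pow_lt_pow_right one_lt_two (by omega)
        have h3 : 1 ≤ 2 ^ (k - 1) := Nat.one_le_two_pow
        exact ⟨le_refl _, by omega⟩
      have h1 : x1 j ^ 2 ≤ 1 := sq_le_one_of_mem hx1 hkIcc hjb
      have h2 : x2 j ^ 2 ≤ 1 := sq_le_one_of_mem hx2 hkIcc hjb
      have hzj : a * x1 j + b * x2 j = 1 := by
        have := hzE j ⟨k, hkIcc, hkT, hval⟩
        rw [← hz] at this
        simpa using this
      have hu : x1 j ≤ 1 := by nlinarith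
      have hv : x2 j ≤ 1 := by nlinarith
      constructor <;> nlinarith
    exact ⟨hx1, fun j hj => (key j hj).1⟩

end Face

section Dim

lemma euclidean_sum_apply {n : ℕ} (s : Finset (Fin n)) (f : Fin n → EuclideanSpace ℝ (Fin n))
    (i : Fin n) : (∑ j ∈ s, f j) i = ∑ j ∈ s, f j i := by
  induction s using Finset.cons_induction with
  | empty => rfl
  | cons a s ha ih => rw [Finset.sum_cons, Finset.sum_cons, ← ih]; rfl

lemma eq_sum_singles {n : ℕ} (s : Finset (Fin n)) (v : EuclideanSpace ℝ (Fin n))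
    (hv : ∀ j, j ∉ s → v j = 0) :
    v = ∑ j ∈ s, v j • EuclideanSpace.single j (1 : ℝ) := by
  ext i
  rw [euclidean_sum_apply]
  simp only [PiLp.smul_apply, EuclideanSpace.single_apply, smul_eq_mul, mul_ite, mul_one, mul_zero]
  rw [Finset.sum_ite_eq s i (fun j => v j)]
  by_cases h : i ∈ s
  · simp [h]
  · simp [h, hv i h]

lemma mem_span_singles {n : ℕ} (s : Finset (Fin n)) (v : EuclideanSpace ℝ (Fin n))
    (hv : ∀ j, j ∉ s → v j = 0) :
    v ∈ Submodule.span ℝ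
      (Set.range fun j : {x // x ∈ s} => EuclideanSpace.single (j : Fin n) (1 : ℝ)) := by
  rw [eq_sum_singles s v hv]
  exact Submodule.sum_mem _ fun j hj => Submodule.smul_mem _ _
    (Submodule.subset_span ⟨⟨j, hj⟩, rfl⟩)

lemma finrank_span_singles {n : ℕ} (s : Finset (Fin n)) :
    Module.finrank ℝ (Submodule.span ℝ
      (Set.range fun j : {x // x ∈ s} => EuclideanSpace.single (j : Fin n) (1 : ℝ))) = s.card := by
  have hli : LinearIndependent ℝ
      (fun j : {x // x ∈ s} => EuclideanSpace.single (j : Fin n) (1 : ℝ)) := by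
    have hb := (EuclideanSpace.basisFun (Fin n) ℝ).toBasis.linearIndependent
    have h2 := hb.comp (Subtype.val : {x // x ∈ s} → Fin n) Subtype.val_injective
    have h3 : ((EuclideanSpace.basisFun (Fin n) ℝ).toBasis : Fin n → EuclideanSpace ℝ (Fin n)) ∘
        (Subtype.val : {x // x ∈ s} → Fin n) =
        fun j : {x // x ∈ s} => EuclideanSpace.single (j : Fin n) (1 : ℝ) := by
      funext j
      simp [EuclideanSpace.basisFun_apply]
    rwa [h3] at h2
  rw [finrank_span_eq_card hli, Fintype.card_coe]

lemma card_filter_Ico (n a b : ℕ) (hb : b ≤ n) :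
    (Finset.univ.filter fun j : Fin n => a ≤ (j : ℕ) ∧ (j : ℕ) < b).card = b - a := by
  rw [← Nat.card_Ico a b]
  apply Finset.card_bij (fun (j : Fin n)
    (_ : j ∈ Finset.univ.filter fun j : Fin n => a ≤ (j : ℕ) ∧ (j : ℕ) < b) => (j : ℕ))
  · intro j hj; simp at hj ⊢; omega
  · intro j1 h1 j2 h2 h; exact Fin.val_injective h
  · intro m hm
    simp at hm
    exact ⟨⟨m, by omega⟩, by simp; omega, rfl⟩

lemma blockF_card {K k : ℕ} (hk1 : 1 ≤ k) (hkK : k ≤ K) :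
    (blockF K k).card = 2 ^ (k - 1) := by
  have h2 : 2 ^ k ≤ 2 ^ K := Nat.pow_le_pow_right (by norm_num) hkK
  have h1 : 2 ^ k = 2 ^ (k - 1) * 2 := by
    conv_lhs => rw [show k = (k - 1) + 1 by omega]
    rw [pow_succ]
  have h3 : 1 ≤ 2 ^ (k - 1) := Nat.one_le_two_pow
  unfold blockF
  rw [card_filter_Ico _ _ _ (by omega)]
  omega

def Ufin (K : ℕ) (T : Finset ℕ) : Finset (Fin (2 ^ K - 1)) :=
  Finset.univ.filter (fun j => ∃ k ∈ T, j ∈ blockF K k)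

lemma Ufin_card {K : ℕ} {T : Finset ℕ} (hT : T ⊆ Finset.Icc 1 K) :
    (Ufin K T).card = ∑ k ∈ T, 2 ^ (k - 1) := by
  have heq : Ufin K T = T.biUnion (fun k => blockF K k) := by
    ext j
    simp [Ufin, Finset.mem_biUnion]
  rw [heq, Finset.card_biUnion]
  · apply Finset.sum_congr rfl
    intro k hk
    have hk' := Finset.mem_Icc.mp (hT hk)
    exact blockF_card hk'.1 hk'.2
  · intro k hk k' hk' hne
    rw [Function.onFun, Finset.disjoint_left]
    intro j hj hj'
    rw [mem_blockF] at hj hj'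
    have h1 := Finset.mem_Icc.mp (hT hk)
    have h2 := Finset.mem_Icc.mp (hT hk')
    exact hne (block_unique h1.1 h2.1 hj.1 hj.2 hj'.1 hj'.2)

lemma vectorSpan_face {K : ℕ} {T : Finset ℕ} (hT : T ⊆ Finset.Icc 1 K) :
    vectorSpan ℝ (faceSet K T) = Submodule.span ℝ
      (Set.range fun j : {x // x ∈ Ufin K T} =>
        EuclideanSpace.single (j : Fin (2 ^ K - 1)) (1 : ℝ)) := by
  apply le_antisymm
  · rw [vectorSpan_def]
    apply Submodule.span_le.2
    rintro v ⟨x, hx, y, hy, rfl⟩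
    apply mem_span_singles
    intro j hjU
    obtain ⟨k, hk1, hkK, hb1, hb2⟩ := exists_block K j j.isLt
    have hkIcc : k ∈ Finset.Icc 1 K := Finset.mem_Icc.mpr ⟨hk1, hkK⟩
    have hjb : j ∈ blockF K k := mem_blockF.2 ⟨hb1, hb2⟩
    have hkT : k ∉ T := by
      intro h
      exact hjU (by simp only [Ufin, Finset.mem_filter, Finset.mem_univ, true_and]
                    exact ⟨k, h, hjb⟩)
    have hxy : x j = y j := by
      by_cases hji : j = idx K k hk1 hkK
      · have hcond : ∃ k', k' ∈ Finset.Icc 1 K ∧ k' ∉ T ∧ (j : ℕ) = 2 ^ (k' - 1) - 1 := by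
          refine ⟨k, hkIcc, hkT, ?_⟩
          rw [hji]; rfl
        rw [hx.2 j hcond, hy.2 j hcond]
      · have hix : x (idx K k hk1 hkK) = 1 := hx.2 _ (cond_of_not_T hk1 hkK hkT)
        have hiy : y (idx K k hk1 hkK) = 1 := hy.2 _ (cond_of_not_T hk1 hkK hkT)
        have hx0 : x j = 0 :=
          forced_zero hx.1 hkIcc (idx_mem_blockF hk1 hkK) hjb (Ne.symm hji) hix
        have hy0 : y j = 0 :=
          forced_zero hy.1 hkIcc (idx_mem_blockF hk1 hkK) hjb (Ne.symm hji) hiy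
        rw [hx0, hy0]
    show (x - y) j = 0
    simp [hxy]
  · apply Submodule.span_le.2
    rintro _ ⟨⟨j, hjU⟩, rfl⟩
    have hjU' : ∃ k ∈ T, j ∈ blockF K k := by
      simpa [Ufin] using hjU
    obtain ⟨k₀, hk₀, hjb⟩ := hjU'
    have hq := q_mem_face hT hk₀ hjb
    have hp := pt_mem_face (K := K) (T := T)
    have heq : EuclideanSpace.single j (1 : ℝ)
        = (pt K T + EuclideanSpace.single j 1) -ᵥ pt K T := by
      show _ = (pt K T + EuclideanSpace.single j 1) - pt K T
      abel
    show EuclideanSpace.single j (1 : ℝ) ∈ vectorSpan ℝ (faceSet K T)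
    rw [heq]
    exact vsub_mem_vectorSpan ℝ hq hp

end Dim

lemma sdim_face {K : ℕ} {T : Finset ℕ} (hT : T ⊆ Finset.Icc 1 K) :
    sdim (faceSet K T) = ∑ k ∈ T, 2 ^ (k - 1) := by
  unfold sdim
  rw [direction_affineSpan, vectorSpan_face hT, finrank_span_singles, Ufin_card hT]

theorem complete_signature_log (K : ℕ) (hK : 0 < K) :
    faceDimSig {x : EuclideanSpace ℝ (Fin (2 ^ K - 1)) |
        ∀ k ∈ Finset.Icc 1 K,
          ∑ j ∈ Finset.univ.filter
              (fun j : Fin (2 ^ K - 1) => 2 ^ (k - 1) - 1 ≤ (j : ℕ) ∧ (j : ℕ) < 2 ^ k - 1),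
            (x j) ^ 2 ≤ 1} =
      {d : ℕ | d ≤ 2 ^ K - 1} := by
  show faceDimSig (CK K) = _
  ext d
  simp only [Set.mem_setOf_eq]
  constructor
  · rintro ⟨F, hF, hne, rfl⟩
    have h1 := Submodule.finrank_le (affineSpan ℝ F).direction
    rw [finrank_euclideanSpace_fin] at h1
    exact h1
  · intro hd
    have h2K : 1 ≤ 2 ^ K := Nat.one_le_two_pow
    obtain ⟨T, hT, hsum⟩ := exists_subset_sum K d (by omega)
    exact ⟨faceSet K T, ⟨faceSet_convex, faceSet_extreme⟩, ⟨pt K T, pt_mem_face⟩,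
      by rw [sdim_face hT, hsum]⟩
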